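/- Work in ℝⁿ with the standard inner product ⟨·,·⟩. Let x, x̃, s, s̃ ∈ ℝⁿ satisfy: ⟨s̃, x⟩ = ⟨s, x̃⟩ = ϑ for some ϑ > 0; ⟨s, x⟩ > 0; ⟨s̃, x̃⟩ > 0. With μ := ⟨s,x⟩/ϑ, define δ_P := x − μ • x̃ and δ_D := s − μ • s̃, and assume ⟨δ_D, δ_P⟩ > 0. Let H be a symmetric positive-definite n×n real matrix. Define H₁ := H + (⟨s,x⟩)⁻¹ x xᵀ − (⟨s, H s⟩)⁻¹ H s sᵀ H and H₂ := H₁ + (⟨δ_D, δ_P⟩)⁻¹ δ_P δ_Pᵀ − (⟨δ_D, H₁ δ_D⟩)⁻¹ H₁ δ_D δ_Dᵀ H₁. Then H₂ is symmetric positive definite, H₂ s = x, and H₂ s̃ = x̃. -/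

import Mathlib

open Matrix

private lemma vmv_mulVec {n : ℕ} (a b v : Fin n → ℝ) :
    vecMulVec a b *ᵥ v = (b ⬝ᵥ v) • a := by
  ext i; simp only [mulVec, vecMulVec_apply, dotProduct, Pi.smul_apply, smul_eq_mul,
    Finset.sum_mul, Finset.mul_sum]
  exact Finset.sum_congr rfl fun j _ => by ring

private lemma herm_transpose {n : ℕ} {H : Matrix (Fin n) (Fin n) ℝ} (hH : H.IsHermitian) :
    Hᵀ = H := by
  ext i j
  have := congrFun (congrFun hH.eq i) j
  simpa [conjTranspose_apply] using this

private lemma herm_vecMul {n : ℕ} {H : Matrix (Fin n) (Fin n) ℝ} (hH : H.IsHermitian)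
    (s : Fin n → ℝ) : s ᵥ* H = H *ᵥ s := by
  rw [← mulVec_transpose, herm_transpose hH]

private lemma posdef_dot {n : ℕ} {H : Matrix (Fin n) (Fin n) ℝ} (hH : H.PosDef)
    {v : Fin n → ℝ} (hv : v ≠ 0) : 0 < v ⬝ᵥ (H *ᵥ v) := by
  simpa using hH.dotProduct_mulVec_pos hv

private lemma possemidef_dot {n : ℕ} {H : Matrix (Fin n) (Fin n) ℝ} (hH : H.PosDef)
    (v : Fin n → ℝ) : 0 ≤ v ⬝ᵥ (H *ᵥ v) := by
  simpa using hH.posSemidef.dotProduct_mulVec_nonneg v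

private lemma dot_symm {n : ℕ} {H : Matrix (Fin n) (Fin n) ℝ} (hH : H.IsHermitian)
    (a b : Fin n → ℝ) : a ⬝ᵥ (H *ᵥ b) = b ⬝ᵥ (H *ᵥ a) := by
  rw [dotProduct_mulVec, herm_vecMul hH, dotProduct_comm]

/-- The DFP low-rank update preserves positive-definiteness and satisfies the secant
equation. -/
private lemma dfp_update {n : ℕ} {H : Matrix (Fin n) (Fin n) ℝ} (hH : H.PosDef)
    {s x : Fin n → ℝ} (hsx : 0 < s ⬝ᵥ x) :
    (H + (s ⬝ᵥ x)⁻¹ • vecMulVec x x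
      - (s ⬝ᵥ (H *ᵥ s))⁻¹ • vecMulVec (H *ᵥ s) (s ᵥ* H)).PosDef ∧
    (H + (s ⬝ᵥ x)⁻¹ • vecMulVec x x
      - (s ⬝ᵥ (H *ᵥ s))⁻¹ • vecMulVec (H *ᵥ s) (s ᵥ* H)) *ᵥ s = x := by
  have hs0 : s ≠ 0 := by rintro rfl; simp at hsx
  have ha : s ⬝ᵥ x ≠ 0 := ne_of_gt hsx
  have hc : 0 < s ⬝ᵥ (H *ᵥ s) := posdef_dot hH hs0
  have hc0 : s ⬝ᵥ (H *ᵥ s) ≠ 0 := ne_of_gt hc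
  have hvm : s ᵥ* H = H *ᵥ s := herm_vecMul hH.1 s
  set H' := H + (s ⬝ᵥ x)⁻¹ • vecMulVec x x
      - (s ⬝ᵥ (H *ᵥ s))⁻¹ • vecMulVec (H *ᵥ s) (s ᵥ* H) with hH'
  -- quadratic form of H'
  have quad : ∀ v : Fin n → ℝ, v ⬝ᵥ (H' *ᵥ v)
      = v ⬝ᵥ (H *ᵥ v) + (s ⬝ᵥ x)⁻¹ * (x ⬝ᵥ v)^2
        - (s ⬝ᵥ (H *ᵥ s))⁻¹ * (v ⬝ᵥ (H *ᵥ s))^2 := by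
    intro v
    rw [hH', sub_mulVec, add_mulVec, smul_mulVec, smul_mulVec, hvm,
      vmv_mulVec, vmv_mulVec, dotProduct_sub, dotProduct_add, dotProduct_smul,
      dotProduct_smul, dotProduct_smul, dotProduct_smul, dotProduct_comm x v]
    have : (H *ᵥ s) ⬝ᵥ v = v ⬝ᵥ (H *ᵥ s) := dotProduct_comm _ _
    rw [this]
    simp only [smul_eq_mul]
    ring
  constructor
  · rw [posDef_iff_dotProduct_mulVec]; constructor
    · -- Hermitian
      have hx : (vecMulVec x x).IsHermitian := by
        ext i j; simp [conjTranspose_apply, vecMulVec_apply, mul_comm]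
      have hu : (vecMulVec (H *ᵥ s) (s ᵥ* H)).IsHermitian := by
        rw [hvm]; ext i j; simp [conjTranspose_apply, vecMulVec_apply, mul_comm]
      have hsymE : ∀ i j, H j i = H i j := fun i j => by
        have := congrFun (congrFun hH.1.eq i) j
        simpa [conjTranspose_apply] using this
      show _ᴴ = _
      rw [hH', hvm]
      ext i j
      simp only [conjTranspose_apply, Matrix.sub_apply, Matrix.add_apply, Matrix.smul_apply, vecMulVec_apply,
        smul_eq_mul, star_trivial]
      rw [hsymE i j, mul_comm (x j) (x i), mul_comm ((H *ᵥ s) j) ((H *ᵥ s) i)]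
    · intro v hv
      have key : 0 < v ⬝ᵥ (H' *ᵥ v) := by
        rw [quad v]
        set t : ℝ := (v ⬝ᵥ (H *ᵥ s)) / (s ⬝ᵥ (H *ᵥ s)) with ht
        set w : Fin n → ℝ := v - t • s with hw
        have hvts : v = w + t • s := by rw [hw]; abel
        have hexp : v ⬝ᵥ (H *ᵥ v) - (s ⬝ᵥ (H *ᵥ s))⁻¹ * (v ⬝ᵥ (H *ᵥ s))^2
            = w ⬝ᵥ (H *ᵥ w) := by
          have e1 : v ⬝ᵥ (H *ᵥ v) = w ⬝ᵥ (H *ᵥ w) + 2 * t * (w ⬝ᵥ (H *ᵥ s))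
              + t^2 * (s ⬝ᵥ (H *ᵥ s)) := by
            rw [hvts]
            rw [mulVec_add, mulVec_smul, add_dotProduct, smul_dotProduct,
              dotProduct_add, dotProduct_add, dotProduct_smul, dotProduct_smul]
            rw [dot_symm hH.1 s w]
            simp only [smul_eq_mul]
            ring
          have e2 : w ⬝ᵥ (H *ᵥ s) = 0 := by
            rw [hw, sub_dotProduct, smul_dotProduct, ht, smul_eq_mul, div_mul_cancel₀ _ hc0, sub_self]
          have e3 : v ⬝ᵥ (H *ᵥ s) = t * (s ⬝ᵥ (H *ᵥ s)) := by
            rw [ht]; field_simp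
          rw [e1, e2, e3]
          field_simp
          ring
        rw [sub_eq_add_neg, add_right_comm, ← sub_eq_add_neg, hexp]
        rcases eq_or_ne (x ⬝ᵥ v) 0 with hxv | hxv
        · have hw0 : w ≠ 0 := by
            intro h0
            have hvt : v = t • s := by
              have := hvts; rw [h0] at this; simpa using this
            have : x ⬝ᵥ v = t * (s ⬝ᵥ x) := by
              rw [hvt, dotProduct_smul, smul_eq_mul, dotProduct_comm]
            rw [hxv] at this
            have ht0 : t = 0 := by
              rcases mul_eq_zero.mp this.symm with h | h
              · exact h
              · exact absurd h ha
            rw [ht0, zero_smul] at hvt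
            exact hv hvt
          have h1 : 0 < w ⬝ᵥ (H *ᵥ w) := posdef_dot hH hw0
          have h2 : 0 ≤ (s ⬝ᵥ x)⁻¹ * (x ⬝ᵥ v)^2 :=
            mul_nonneg (le_of_lt (inv_pos.mpr hsx)) (sq_nonneg _)
          linarith
        · have h1 : 0 ≤ w ⬝ᵥ (H *ᵥ w) := possemidef_dot hH w
          have h2 : 0 < (s ⬝ᵥ x)⁻¹ * (x ⬝ᵥ v)^2 :=
            mul_pos (inv_pos.mpr hsx) (by positivity)
          linarith
      simpa using key
  · rw [hH', sub_mulVec, add_mulVec, smul_mulVec, smul_mulVec, hvm,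
      vmv_mulVec, vmv_mulVec, dotProduct_comm x s, dotProduct_comm (H *ᵥ s) s]
    rw [inv_smul_smul₀ ha, inv_smul_smul₀ hc0]
    abel

/-- Theorem 4.1: the pair of DFP-type low-rank updates produces a symmetric
positive-definite matrix mapping `s` to `x` and `s̃` to `x̃`. -/
theorem stmt_10 (n : ℕ) (ϑ : ℝ) (hϑ : 0 < ϑ)
    (x xt s st : Fin n → ℝ)
    (h1 : st ⬝ᵥ x = ϑ) (h2 : s ⬝ᵥ xt = ϑ)
    (h3 : 0 < s ⬝ᵥ x) (h4 : 0 < st ⬝ᵥ xt)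
    (μ : ℝ) (hμ : μ = s ⬝ᵥ x / ϑ)
    (δP δD : Fin n → ℝ) (hδP : δP = x - μ • xt) (hδD : δD = s - μ • st)
    (h5 : 0 < δD ⬝ᵥ δP)
    (H : Matrix (Fin n) (Fin n) ℝ) (hH : H.PosDef)
    (H1 H2 : Matrix (Fin n) (Fin n) ℝ)
    (hH1 : H1 = H + (s ⬝ᵥ x)⁻¹ • vecMulVec x x
        - (s ⬝ᵥ (H *ᵥ s))⁻¹ • vecMulVec (H *ᵥ s) (s ᵥ* H))
    (hH2 : H2 = H1 + (δD ⬝ᵥ δP)⁻¹ • vecMulVec δP δP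
        - (δD ⬝ᵥ (H1 *ᵥ δD))⁻¹ • vecMulVec (H1 *ᵥ δD) (δD ᵥ* H1)) :
    H2.PosDef ∧ H2 *ᵥ s = x ∧ H2 *ᵥ st = xt := by
  have hμpos : 0 < μ := by rw [hμ]; positivity
  obtain ⟨hH1pd, hH1s⟩ : H1.PosDef ∧ H1 *ᵥ s = x := by
    rw [hH1]; exact dfp_update hH h3
  obtain ⟨hH2pd, hH2d⟩ : H2.PosDef ∧ H2 *ᵥ δD = δP := by
    rw [hH2]; exact dfp_update hH1pd h5
  -- key orthogonality
  have hsδP : s ⬝ᵥ δP = 0 := by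
    rw [hδP, dotProduct_sub, dotProduct_smul, smul_eq_mul, h2, hμ]
    field_simp
    ring
  have hδDx : δD ⬝ᵥ x = 0 := by
    rw [hδD, sub_dotProduct, smul_dotProduct, smul_eq_mul, h1, hμ]
    field_simp
    ring
  have hH2s : H2 *ᵥ s = x := by
    have hvm1 : δD ᵥ* H1 = H1 *ᵥ δD := herm_vecMul hH1pd.1 δD
    rw [hH2, sub_mulVec, add_mulVec, smul_mulVec, smul_mulVec,
      hvm1, vmv_mulVec, vmv_mulVec]
    have e1 : δP ⬝ᵥ s = 0 := by rw [dotProduct_comm]; exact hsδP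
    have e2 : (H1 *ᵥ δD) ⬝ᵥ s = 0 := by
      rw [dotProduct_comm, dot_symm hH1pd.1 s δD, hH1s]
      exact hδDx
    rw [e1, e2, hH1s]
    simp
  refine ⟨hH2pd, hH2s, ?_⟩
  have hδ : H2 *ᵥ δD = H2 *ᵥ s - μ • (H2 *ᵥ st) := by
    rw [hδD, mulVec_sub, mulVec_smul]
  rw [hH2d, hH2s, hδP] at hδ
  have h6 : μ • xt = μ • (H2 *ᵥ st) := sub_right_inj.mp hδ
  exact (smul_right_injective (Fin n → ℝ) (ne_of_gt hμpos) h6).symm
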